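/- If D is a finite-dimensional division algebra over a field k and the category of finite-dimensional D-modules is equivalent (as a k-linear category) to the category of finite-dimensional k-vector spaces, then D is isomorphic to k as a k-algebra. -/

import Mathlib

open CategoryTheory

/-- Scaling of a `D`-linear map by a scalar `a : k`, for `D` a `k`-algebra (so that `k`
maps into the center of `D`). -/
def kSMulHomMod (k D : Type) [Field k] [DivisionRing D] [Algebra k D]
    {X Y : ModuleCat D} (a : k) (f : X ⟶ Y) : X ⟶ Y :=
  ModuleCat.ofHom (LinearMap.mk
    (AddHom.mk (fun x => algebraMap k D a • f x)
      (by intro x y; simp [map_add, smul_add]))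
    (by
      intro d x
      simp only [map_smul, RingHom.id_apply]
      rw [smul_smul, smul_smul, Algebra.commutes]) : X →ₗ[D] Y)

/-- The `k`-module structure on hom-sets of `FGModuleCat D`. -/
def kSMulHom (k D : Type) [Field k] [DivisionRing D] [Algebra k D]
    {X Y : FGModuleCat D} (a : k) (f : X ⟶ Y) : X ⟶ Y :=
  ObjectProperty.homMk (kSMulHomMod k D (X := X.obj) (Y := Y.obj) a f.hom)

/-- If the category of finite-dimensional modules over a finite-dimensional division
`k`-algebra `D` is `k`-linearly equivalent to the category of finite-dimensional
`k`-vector spaces, then `D ≅ k` as `k`-algebras. -/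
theorem division_algebra_of_k_linear_equivalence
    (k D : Type) [Field k] [DivisionRing D] [Algebra k D] [FiniteDimensional k D]
    (e : FGModuleCat D ≌ FGModuleCat k)
    (hlin : ∀ (X Y : FGModuleCat D) (f g : X ⟶ Y) (a : k),
      e.functor.map (kSMulHom k D a f + g) = a • e.functor.map f + e.functor.map g) :
    Nonempty (D ≃ₐ[k] k) := by
  classical
  -- additivity and k-scalar compatibility of `e.functor.map`
  have hone : ∀ {X Y : FGModuleCat D} (f : X ⟶ Y), kSMulHom k D 1 f = f := by
    intro X Y f
    apply FGModuleCat.hom_ext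
    apply LinearMap.ext
    intro x
    show algebraMap k D 1 • f.hom.hom x = f.hom.hom x
    simp
  have hmap_add : ∀ {X Y : FGModuleCat D} (f g : X ⟶ Y),
      e.functor.map (f + g) = e.functor.map f + e.functor.map g := by
    intro X Y f g
    have h := hlin X Y f g 1
    rwa [hone, one_smul] at h
  have hmap_zero : ∀ {X Y : FGModuleCat D}, e.functor.map (0 : X ⟶ Y) = 0 := by
    intro X Y
    have h := hmap_add (0 : X ⟶ Y) 0
    rw [add_zero] at h
    exact add_eq_left.mp h.symm
  have hmap_smul : ∀ {X Y : FGModuleCat D} (f : X ⟶ Y) (a : k),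
      e.functor.map (kSMulHom k D a f) = a • e.functor.map f := by
    intro X Y f a
    have h := hlin X Y f 0 a
    rwa [add_zero, hmap_zero, add_zero] at h
  -- the object `D` in `FGModuleCat D`, and right multiplications
  let X : FGModuleCat.{u_1} D := FGModuleCat.of D (ULift.{u_1} D)
  let U : ULift.{u_1} D ≃ₗ[D] D := ULift.moduleEquiv
  let τ : D → (D →ₗ[D] D) := fun d => LinearMap.toSpanSingleton D D d
  have hτ_inj : Function.Injective τ := by
    intro d₁ d₂ h
    have := DFunLike.congr_fun h (1 : D)
    simpa [τ, LinearMap.toSpanSingleton_apply] using this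
  have hτ_surj : ∀ f : D →ₗ[D] D, τ (f 1) = f := by
    intro f
    apply LinearMap.ext
    intro x
    show x • f 1 = f x
    rw [← f.map_smul, smul_eq_mul, mul_one]
  have hτ_one : τ 1 = LinearMap.id := by
    apply LinearMap.ext; intro x
    show x • (1 : D) = x
    simp [smul_eq_mul]
  have hτ_zero : τ 0 = 0 := by
    apply LinearMap.ext; intro x
    show x • (0 : D) = 0
    simp
  have hτ_add : ∀ d₁ d₂, τ (d₁ + d₂) = τ d₁ + τ d₂ := by
    intro d₁ d₂
    apply LinearMap.ext; intro x
    show x • (d₁ + d₂) = x • d₁ + x • d₂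
    simp [smul_eq_mul, mul_add]
  have hτ_smul : ∀ (a : k) (d : D),
      τ (a • d) = fun x => algebraMap k D a • τ d x := by
    intro a d
    funext x
    show x • (a • d) = algebraMap k D a • (x • d)
    simp only [smul_eq_mul, Algebra.smul_def]
    rw [← mul_assoc, ← Algebra.commutes a x, mul_assoc]
  have hτ_mul : ∀ d₁ d₂, τ (d₁ * d₂) = (τ d₂).comp (τ d₁) := by
    intro d₁ d₂
    apply LinearMap.ext; intro x
    show x • (d₁ * d₂) = (x • d₁) • d₂
    simp [smul_eq_mul, mul_assoc]
  -- transport to `X ⟶ X` and along the equivalence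
  let ρ : D → (X ⟶ X) := fun d =>
    FGModuleCat.ofHom (U.symm.toLinearMap ∘ₗ τ d ∘ₗ U.toLinearMap)
  let ψ : D → (e.functor.obj X ⟶ e.functor.obj X) := fun d => e.functor.map (ρ d)
  have hψ_inj : Function.Injective ψ := fun d₁ d₂ h =>
    hτ_inj (by
      have h' := e.functor.map_injective h
      apply LinearMap.ext
      intro x
      exact congrArg (fun g : X ⟶ X => (g.hom.hom (ULift.up x)).down) h')
  have hψ_surj : Function.Surjective ψ := by
    intro g
    obtain ⟨f, hf⟩ := e.functor.map_surjective g
    refine ⟨(f.hom.hom (ULift.up 1)).down, ?_⟩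
    show e.functor.map (ρ ((f.hom.hom (ULift.up 1)).down)) = g
    have : ρ ((f.hom.hom (ULift.up 1)).down) = f := by
      apply FGModuleCat.hom_ext
      apply LinearMap.ext
      intro x
      apply ULift.ext
      exact congrArg (fun h => h x.down)
        (hτ_surj (U.toLinearMap ∘ₗ f.hom.hom ∘ₗ U.symm.toLinearMap))
    rw [this, hf]
  have hψ_add : ∀ d₁ d₂, ψ (d₁ + d₂) = ψ d₁ + ψ d₂ := by
    intro d₁ d₂
    show e.functor.map (ρ (d₁ + d₂)) = e.functor.map (ρ d₁) + e.functor.map (ρ d₂)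
    have : ρ (d₁ + d₂) = ρ d₁ + ρ d₂ := by
      apply FGModuleCat.hom_ext
      apply LinearMap.ext
      intro x
      apply ULift.ext
      show τ (d₁ + d₂) x.down = τ d₁ x.down + τ d₂ x.down
      rw [hτ_add]; rfl
    rw [this, hmap_add]
  have hψ_smul : ∀ (a : k) (d : D), ψ (a • d) = a • ψ d := by
    intro a d
    show e.functor.map (ρ (a • d)) = a • e.functor.map (ρ d)
    have : ρ (a • d) = kSMulHom k D a (ρ d) := by
      apply FGModuleCat.hom_ext
      apply LinearMap.ext
      intro x
      apply ULift.ext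
      exact congrFun (hτ_smul a d) x.down
    rw [this, hmap_smul]
  have hψ_mul : ∀ d₁ d₂, ψ (d₁ * d₂) = ψ d₁ ≫ ψ d₂ := by
    intro d₁ d₂
    show e.functor.map (ρ (d₁ * d₂)) = _
    have : ρ (d₁ * d₂) = ρ d₁ ≫ ρ d₂ := by
      apply FGModuleCat.hom_ext
      apply LinearMap.ext
      intro x
      apply ULift.ext
      show τ (d₁ * d₂) x.down = τ d₂ (τ d₁ x.down)
      rw [hτ_mul]; rfl
    rw [this, e.functor.map_comp]
  have hψ_zero : ψ 0 = 0 := by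
    show e.functor.map (ρ 0) = 0
    have : ρ (0 : D) = 0 := by
      apply FGModuleCat.hom_ext
      apply LinearMap.ext
      intro x
      apply ULift.ext
      show τ 0 x.down = 0
      rw [hτ_zero]; rfl
    rw [this, hmap_zero]
  -- the underlying vector space
  let W : Type u_2 := e.functor.obj X
  haveI hWfin : Module.Finite k W := (e.functor.obj X).property
  -- `W` is nontrivial
  have hW_nontriv : ∃ w : W, w ≠ 0 := by
    by_contra h
    push_neg at h
    have h10 : ψ 1 = ψ 0 := by
      apply FGModuleCat.hom_ext
      apply LinearMap.ext
      intro w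
      exact (h _).trans (h _).symm
    exact one_ne_zero (hψ_inj h10)
  -- `finrank k W = 1`
  have hn : Module.finrank k W = 1 := by
    obtain ⟨w, hw⟩ := hW_nontriv
    have hpos : 0 < Module.finrank k W := Module.finrank_pos_iff.mpr ⟨⟨w, 0, hw⟩⟩
    by_contra hne
    have h2 : 2 ≤ Module.finrank k W := by omega
    set n := Module.finrank k W with hnn
    let b : Module.Basis (Fin n) k W := Module.finBasis k W
    have h0 : (⟨0, by omega⟩ : Fin n) ≠ (⟨1, by omega⟩ : Fin n) := by
      intro h
      have := congrArg Fin.val h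
      simp at this
    let f : W →ₗ[k] W :=
      (LinearMap.toSpanSingleton k W (b ⟨0, by omega⟩)).comp (b.coord ⟨1, by omega⟩)
    have hf1 : f (b ⟨1, by omega⟩) = b ⟨0, by omega⟩ := by
      simp [f, LinearMap.toSpanSingleton_apply]
    have hfne : f ≠ 0 := by
      intro h
      apply b.ne_zero ⟨0, by omega⟩
      rw [← hf1, h]
      rfl
    have hff : ∀ x, f (f x) = 0 := by
      intro x
      simp only [f, LinearMap.comp_apply, LinearMap.toSpanSingleton_apply]
      rw [map_smul]
      have hc : b.coord ⟨1, by omega⟩ (b ⟨0, by omega⟩) = 0 := by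
        rw [Module.Basis.coord_apply, Module.Basis.repr_self]
        exact Finsupp.single_eq_of_ne h0.symm
      rw [hc]
      simp
    obtain ⟨d, hd⟩ := hψ_surj
      (ObjectProperty.homMk (ModuleCat.ofHom f) : e.functor.obj X ⟶ e.functor.obj X)
    have hdd : ψ (d * d) = ψ 0 := by
      rw [hψ_mul, hψ_zero, hd]
      apply FGModuleCat.hom_ext
      apply LinearMap.ext
      intro x
      exact hff x
    have hd2 : d * d = 0 := hψ_inj hdd
    rcases mul_eq_zero.mp hd2 with h | h <;>
      exact hfne (by
        have h' := hd
        rw [h, hψ_zero] at h'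
        ext x
        exact (congrArg (fun g : e.functor.obj X ⟶ e.functor.obj X => g.hom.hom x) h').symm)
  -- dimension count: `finrank k D = 1`
  have hψlin : D ≃ₗ[k] (W →ₗ[k] W) :=
    LinearEquiv.ofBijective
      { toFun := fun d => (ψ d).hom.hom
        map_add' := fun a b => by rw [hψ_add]; rfl
        map_smul' := fun a d => by rw [hψ_smul]; rfl }
      ⟨fun a b h => hψ_inj (FGModuleCat.hom_ext h), fun g => by
        obtain ⟨d, hd⟩ := hψ_surj
          (ObjectProperty.homMk (ModuleCat.ofHom g) : e.functor.obj X ⟶ e.functor.obj X)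
        exact ⟨d, by show (ψ d).hom.hom = g; rw [hd]; rfl⟩⟩
  have hD1 : Module.finrank k D = 1 := by
    rw [hψlin.finrank_eq, Module.finrank_linearMap, hn]
  -- conclude
  have hsurj : Function.Surjective (algebraMap k D) := by
    have h1 := (finrank_eq_one_iff_of_nonzero' (1 : D) one_ne_zero).mp hD1
    intro d
    obtain ⟨c, hc⟩ := h1 d
    exact ⟨c, by rwa [Algebra.smul_def, mul_one] at hc⟩
  have hinj : Function.Injective (algebraMap k D) := (algebraMap k D).injective
  exact ⟨(AlgEquiv.ofBijective (Algebra.ofId k D) ⟨hinj, hsurj⟩).symm⟩
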